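/- Let H be a Hilbert space, μ a self-adjoint contraction (Markov operator) on H, and P', P orthogonal projections with P P' = P' P = P' and μP' = PμP'. Suppose ‖PμP‖_op ≤ C for some 0 < C < 1. If (fₙ) is a sequence of unit vectors with ‖μfₙ‖ → 1, then limsupₙ ‖P' fₙ‖² ≤ (2C/(C²+1))² ≤ 4C². -/

import Mathlib

open Filter RCLike

set_option maxHeartbeats 1600000 in
theorem limsup_proj_sq_le_of_markov_contraction
    {H : Type*} [NormedAddCommGroup H] [InnerProductSpace ℂ H] [CompleteSpace H]
    (A P P' : H →L[ℂ] H)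
    (hA : IsSelfAdjoint A) (hAnorm : ‖A‖ ≤ 1)
    (hP : IsSelfAdjoint P) (hPidem : P.comp P = P)
    (hP' : IsSelfAdjoint P') (hP'idem : P'.comp P' = P')
    (hPP' : P.comp P' = P') (hP'P : P'.comp P = P')
    (hAP' : A.comp P' = P.comp (A.comp P'))
    (C : ℝ) (hC0 : 0 < C) (hC1 : C < 1)
    (hnorm : ‖P.comp (A.comp P)‖ ≤ C)
    (f : ℕ → H) (hf : ∀ n, ‖f n‖ = 1)
    (hAf : Filter.Tendsto (fun n => ‖A (f n)‖) Filter.atTop (nhds 1)) :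
    (Filter.atTop.limsup fun n => ‖P' (f n)‖ ^ 2) ≤ (2 * C / (C ^ 2 + 1)) ^ 2 ∧
      (2 * C / (C ^ 2 + 1)) ^ 2 ≤ 4 * C ^ 2 := by
  have hsym' := hP'.isSymmetric
  -- ‖P' v‖² = re ⟪v, P' v⟫
  have hP'app : ∀ v : H, P' (P' v) = P' v := fun v => congrFun (congrArg DFunLike.coe hP'idem) v
  have hsymm : ∀ u w : H, inner ℂ (P' u) w = inner ℂ u (P' w) := fun u w => hsym' u w
  have hinner : ∀ v : H, inner ℂ (P' v) (P' v) = inner ℂ v (P' v) := by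
    intro v
    rw [hsymm v (P' v), hP'app]
  -- Pythagoras: ‖v - P'v‖² = ‖v‖² - ‖P'v‖²
  have hpyth : ∀ v : H, ‖v - P' v‖ ^ 2 = ‖v‖ ^ 2 - ‖P' v‖ ^ 2 := by
    intro v
    have horth : (inner ℂ (P' v) (v - P' v)) = 0 := by
      rw [inner_sub_right, hinner, hsymm v v]
      ring
    have : ‖P' v + (v - P' v)‖ ^ 2 = ‖P' v‖ ^ 2 + 2 * re (inner ℂ (P' v) (v - P' v))
        + ‖v - P' v‖ ^ 2 := norm_add_sq _ _
    rw [horth] at this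
    simp only [map_zero] at this
    have h2 : P' v + (v - P' v) = v := by abel
    rw [h2] at this
    linarith
  -- ‖P' v‖ ≤ ‖v‖
  have hcontr : ∀ v : H, ‖P' v‖ ≤ ‖v‖ := by
    intro v
    have h1 : ‖P' v‖ ^ 2 = re (inner ℂ v (P' v)) := by
      rw [← hinner]
      rw [← @inner_self_eq_norm_sq ℂ]
    have h2 : re (inner ℂ v (P' v)) ≤ ‖v‖ * ‖P' v‖ := by
      calc re (inner ℂ v (P' v)) ≤ ‖(inner ℂ v (P' v))‖ := RCLike.re_le_norm _
        _ ≤ ‖v‖ * ‖P' v‖ := norm_inner_le_norm _ _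
    nlinarith [norm_nonneg (P' v), norm_nonneg v, sq_nonneg (‖P' v‖ - ‖v‖)]
  set x : ℕ → ℝ := fun n => ‖P' (f n)‖ with hxdef
  set y : ℕ → ℝ := fun n => ‖A (f n)‖ with hydef
  have hx0 : ∀ n, 0 ≤ x n := fun n => norm_nonneg _
  have hx1 : ∀ n, x n ≤ 1 := fun n => by rw [hxdef]; simpa [hf n] using hcontr (f n)
  -- key decomposition estimate: y n ≤ C * x n + ‖f n - P' (f n)‖ with ‖f n - P' f n‖² = 1 - x n²
  have hkey : ∀ n, y n ≤ C * x n + Real.sqrt (1 - x n ^ 2) := by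
    intro n
    have hsplit : A (f n) = A (P' (f n)) + A (f n - P' (f n)) := by
      rw [← map_add]; congr 1; abel
    have h1 : ‖A (P' (f n))‖ ≤ C * x n := by
      have he : A (P' (f n)) = (P.comp (A.comp P)) (P' (f n)) := by
        have : A.comp P' = (P.comp (A.comp P)).comp P' := by
          rw [ContinuousLinearMap.comp_assoc, ContinuousLinearMap.comp_assoc, hPP', hAP',
            ← hAP']
          exact hAP'
        calc A (P' (f n)) = (A.comp P') (f n) := rfl
          _ = ((P.comp (A.comp P)).comp P') (f n) := by rw [this]
          _ = (P.comp (A.comp P)) (P' (f n)) := rfl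
      rw [he]
      calc ‖(P.comp (A.comp P)) (P' (f n))‖ ≤ ‖P.comp (A.comp P)‖ * ‖P' (f n)‖ :=
            ContinuousLinearMap.le_opNorm _ _
        _ ≤ C * x n := by
            apply mul_le_mul hnorm le_rfl (norm_nonneg _) (le_of_lt hC0)
    have h2 : ‖A (f n - P' (f n))‖ ≤ Real.sqrt (1 - x n ^ 2) := by
      have hle : ‖A (f n - P' (f n))‖ ≤ ‖f n - P' (f n)‖ := by
        calc ‖A (f n - P' (f n))‖ ≤ ‖A‖ * ‖f n - P' (f n)‖ := ContinuousLinearMap.le_opNorm _ _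
          _ ≤ 1 * ‖f n - P' (f n)‖ := by
              apply mul_le_mul hAnorm le_rfl (norm_nonneg _) zero_le_one
          _ = ‖f n - P' (f n)‖ := one_mul _
      have hsq : ‖f n - P' (f n)‖ ^ 2 = 1 - x n ^ 2 := by
        rw [hpyth (f n), hf n]; norm_num; rfl
      have : ‖f n - P' (f n)‖ = Real.sqrt (1 - x n ^ 2) := by
        rw [← hsq, Real.sqrt_sq (norm_nonneg _)]
      linarith [hle, this.le, this.ge]
    calc y n = ‖A (f n)‖ := rfl
      _ ≤ ‖A (P' (f n))‖ + ‖A (f n - P' (f n))‖ := by rw [hsplit]; exact norm_add_le _ _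
      _ ≤ C * x n + Real.sqrt (1 - x n ^ 2) := add_le_add h1 h2
  clear_value x y
  -- define the continuous bound function
  set g : ℝ → ℝ := fun t =>
    ((C * t + Real.sqrt (C ^ 2 * t ^ 2 + (1 + C ^ 2) * (1 - t ^ 2))) / (1 + C ^ 2)) ^ 2 with hgdef
  have hgcont : Continuous g := by
    apply Continuous.pow
    apply Continuous.div_const
    exact (continuous_const.mul continuous_id).add
      (Real.continuous_sqrt.comp (by continuity))
  clear_value g
  have hg1 : g 1 = (2 * C / (C ^ 2 + 1)) ^ 2 := by
    simp only [hgdef]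
    rw [show C ^ 2 * (1:ℝ) ^ 2 + (1 + C ^ 2) * (1 - (1:ℝ) ^ 2) = C ^ 2 by ring,
      Real.sqrt_sq hC0.le]
    ring
  -- eventually, x n ^ 2 ≤ g (y n)
  have hev : ∀ᶠ n in atTop, x n ^ 2 ≤ g (y n) := by
    have hyC : ∀ᶠ n in atTop, C < y n := by
      exact hAf (Ioi_mem_nhds hC1)
    filter_upwards [hyC] with n hn
    have hxn0 := hx0 n; have hxn1 := hx1 n
    have hCx : C * x n ≤ C := by nlinarith
    have hpos : 0 ≤ y n - C * x n := by nlinarith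
    have hsq : (y n - C * x n) ^ 2 ≤ 1 - x n ^ 2 := by
      have h := hkey n
      have hs : y n - C * x n ≤ Real.sqrt (1 - x n ^ 2) := by linarith
      have h1x : 0 ≤ 1 - x n ^ 2 := by nlinarith
      nlinarith [Real.sq_sqrt h1x, Real.sqrt_nonneg (1 - x n ^ 2)]
    -- quadratic inequality: (1+C²)x² - 2Cxy + y² - 1 ≤ 0
    have hquad : (1 + C ^ 2) * x n ^ 2 - 2 * C * x n * y n + y n ^ 2 - 1 ≤ 0 := by nlinarith
    set D := C ^ 2 * y n ^ 2 + (1 + C ^ 2) * (1 - y n ^ 2) with hDdef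
    have hDsq : ((1 + C ^ 2) * x n - C * y n) ^ 2 ≤ D := by nlinarith
    have hle : (1 + C ^ 2) * x n - C * y n ≤ Real.sqrt D := Real.le_sqrt_of_sq_le hDsq
    have hxle : x n ≤ (C * y n + Real.sqrt D) / (1 + C ^ 2) := by
      rw [le_div_iff₀ (by positivity)]
      linarith
    have hrhs0 : 0 ≤ (C * y n + Real.sqrt D) / (1 + C ^ 2) := le_trans hxn0 hxle
    have : g (y n) = ((C * y n + Real.sqrt D) / (1 + C ^ 2)) ^ 2 := by rw [hgdef]
    rw [this]
    nlinarith
  -- limsup bound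
  have hgy : Tendsto (fun n => g (y n)) atTop (nhds ((2 * C / (C ^ 2 + 1)) ^ 2)) := by
    rw [← hg1]
    exact (hgcont.tendsto 1).comp hAf
  have hcob : IsCoboundedUnder (· ≤ ·) atTop (fun n => x n ^ 2) :=
    isCoboundedUnder_le_of_le atTop (x := 0) (fun n => sq_nonneg _)
  constructor
  · have hgoal : (fun n => ‖P' (f n)‖ ^ 2) = fun n => x n ^ 2 := by rw [hxdef]
    rw [hgoal]
    apply le_of_forall_pos_le_add
    intro ε hε
    apply Filter.limsup_le_of_le hcob
    have : ∀ᶠ n in atTop, g (y n) ≤ (2 * C / (C ^ 2 + 1)) ^ 2 + ε :=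
      hgy (Iic_mem_nhds (by linarith))
    filter_upwards [hev, this] with n h1 h2
    linarith
  · have h1 : (2 * C / (C ^ 2 + 1)) ^ 2 = 4 * C ^ 2 / (C ^ 2 + 1) ^ 2 := by
      rw [div_pow]; congr 1; ring
    rw [h1]
    apply div_le_self (by positivity)
    nlinarith [sq_nonneg C]
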